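/- Let Ω = (0,1) with its Borel σ-field and Lebesgue (probability) measure P, and let C = {f ∈ L0+ : E_P[f] = 1}. Then the set of maximal elements of the closure of C equals {f ∈ L0+ : E_P[f] = 1}, which equals the set of maximal elements of C; in particular, C is max-closed. -/

import Mathlib

open MeasureTheory Filter Set

noncomputable section

variable {Ω : Type*} [MeasurableSpace Ω]

/-- The nonnegative orthant `L⁰₊` of the space `L⁰` of (a.e.-equivalence classes of)
random variables over `(Ω, ℱ, P)`. -/
def L0plus (P : Measure Ω) : Set (Ω →ₘ[P] ℝ) := {f | 0 ≤ f}

/-- The metric `(f, g) ↦ E[1 ∧ |f - g|]` inducing the topology of convergence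
in probability on `L⁰`. -/
def dist0 (P : Measure Ω) (f g : Ω →ₘ[P] ℝ) : ℝ :=
  ∫ ω, min 1 |f ω - g ω| ∂P

/-- Convergence in probability of a sequence in `L⁰`. -/
def Tendsto0 (P : Measure Ω) (f : ℕ → Ω →ₘ[P] ℝ) (g : Ω →ₘ[P] ℝ) : Prop :=
  Tendsto (fun n => dist0 P (f n) g) atTop (nhds 0)

/-- Closure of a set in `L⁰` with respect to the topology of convergence in probability. -/
def closure0 (P : Measure Ω) (C : Set (Ω →ₘ[P] ℝ)) : Set (Ω →ₘ[P] ℝ) :=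
  {f | ∀ ε : ℝ, 0 < ε → ∃ g ∈ C, dist0 P f g < ε}

/-- A set of `L⁰` is closed iff it contains its closure. -/
def IsClosed0 (P : Measure Ω) (C : Set (Ω →ₘ[P] ℝ)) : Prop :=
  closure0 P C ⊆ C

/-- Boundedness (in probability) of a set `C ⊆ L⁰₊` : `lim_{ℓ → ∞} sup_{f ∈ C} P[f > ℓ] = 0`. -/
def Bounded0 (P : Measure Ω) (C : Set (Ω →ₘ[P] ℝ)) : Prop :=
  Tendsto (fun ℓ : ℝ => ⨆ f ∈ C, P {ω | ℓ < f ω}) atTop (nhds 0)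

/-- The set `C^max` of maximal elements of `C ⊆ L⁰₊` : `f ∈ C` such that `f ≤ g` a.s.
and `g ∈ C` imply `f = g` a.s. -/
def maxSet (P : Measure Ω) (C : Set (Ω →ₘ[P] ℝ)) : Set (Ω →ₘ[P] ℝ) :=
  {f | f ∈ C ∧ ∀ g ∈ C, f ≤ g → f = g}

/-- `C` is max-closed if every maximal element of its closure already belongs to `C`. -/
def MaxClosed (P : Measure Ω) (C : Set (Ω →ₘ[P] ℝ)) : Prop :=
  maxSet P (closure0 P C) ⊆ C

/-- The pairing `⟨μ, f⟩ = ∫ f dμ ∈ [0, ∞]` between a nonnegative measure `μ` and `f ∈ L⁰₊`. -/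
def pairing {P : Measure Ω} (μ : Measure Ω) (f : Ω →ₘ[P] ℝ) : ENNReal :=
  ∫⁻ ω, ENNReal.ofReal (f ω) ∂μ

/-- The set `C^osp` of outer support points of `C ⊆ L⁰₊`: points `g ∈ C^max` for which there
is a σ-finite nonnegative measure `μ ≪ P` with `0 < sup_{f ∈ C} ⟨μ, f⟩ = ⟨μ, g⟩ < ∞`;
by convention `{0}^osp = {0}`. -/
def osp (P : Measure Ω) (C : Set (Ω →ₘ[P] ℝ)) : Set (Ω →ₘ[P] ℝ) :=
  {g | g ∈ maxSet P C ∧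
    (C = {0} ∨ ∃ μ : Measure Ω, μ ≪ P ∧ SigmaFinite μ ∧
      0 < pairing μ g ∧ pairing μ g < ⊤ ∧ (⨆ f ∈ C, pairing μ f) = pairing μ g)}

/-- The solid hull of `C ⊆ L⁰₊`. -/
def solidHull (P : Measure Ω) (C : Set (Ω →ₘ[P] ℝ)) : Set (Ω →ₘ[P] ℝ) :=
  {f | f ∈ L0plus P ∧ ∃ g ∈ C, f ≤ g}

/-- A set `S ⊆ L⁰₊` is solid if `g ∈ S` and `0 ≤ f ≤ g` imply `f ∈ S`. -/
def Solid (P : Measure Ω) (S : Set (Ω →ₘ[P] ℝ)) : Prop :=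
  ∀ g ∈ S, ∀ f : Ω →ₘ[P] ℝ, 0 ≤ f → f ≤ g → f ∈ S

/-- `(g n)` is a sequence of forward convex combinations of `(f n)`. -/
def ForwardConvexComb (P : Measure Ω) (f g : ℕ → Ω →ₘ[P] ℝ) : Prop :=
  ∀ n : ℕ, g n ∈ convexHull ℝ (f '' Set.Ici n)

end

noncomputable section

/-- The probability space `Ω = (0,1)` with its Borel σ-field and Lebesgue measure. -/
abbrev Omega01 : Type := Set.Ioo (0:ℝ) 1

/-- Lebesgue measure on `(0,1)`, a probability measure. -/
noncomputable def P01 : Measure Omega01 :=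
  (volume : Measure ℝ).comap Subtype.val

/-- The set `C = {f ∈ L⁰₊ : E_P[f] = 1}`. -/
noncomputable def C01 : Set (Omega01 →ₘ[P01] ℝ) :=
  {f | f ∈ L0plus P01 ∧ ∫⁻ ω, ENNReal.ofReal (f ω) ∂P01 = 1}

end


section Aux

open ENNReal

instance P01_prob : IsProbabilityMeasure P01 := by
  constructor
  rw [P01, (MeasurableEmbedding.subtype_coe measurableSet_Ioo).comap_apply]
  have : Subtype.val '' (univ : Set Omega01) = Set.Ioo (0:ℝ) 1 :=
    Subtype.coe_image_univ _
  rw [this, Real.volume_Ioo]; norm_num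

variable {f g : Omega01 →ₘ[P01] ℝ}

lemma aemeas_ofReal (f : Omega01 →ₘ[P01] ℝ) :
    AEMeasurable (fun ω => ENNReal.ofReal (f ω)) P01 :=
  f.aestronglyMeasurable.aemeasurable.ennreal_ofReal

/-- Lemma A: if `f ∈ C01`, `f ≤ g` and `E g ≤ 1`, then `f = g`. -/
lemma lemA (hf : f ∈ C01) (hfg : f ≤ g)
    (hg1 : ∫⁻ ω, ENNReal.ofReal (g ω) ∂P01 ≤ 1) : f = g := by
  obtain ⟨hf0, hf1⟩ := hf
  have hle : (f : Omega01 → ℝ) ≤ᵐ[P01] g := (AEEqFun.coeFn_le).mpr hfg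
  have h0 : (0 : Omega01 → ℝ) ≤ᵐ[P01] f :=
    (AEEqFun.coeFn_zero (μ := P01)).symm.trans_le ((AEEqFun.coeFn_le).mpr hf0)
  have hsplit : ∀ᵐ ω ∂P01, ENNReal.ofReal (g ω)
      = ENNReal.ofReal (f ω) + ENNReal.ofReal (g ω - f ω) := by
    filter_upwards [hle, h0] with ω h1 h2
    rw [← ENNReal.ofReal_add h2 (by linarith)]
    ring_nf
  have hadd : ∫⁻ ω, ENNReal.ofReal (g ω) ∂P01
      = ∫⁻ ω, ENNReal.ofReal (f ω) ∂P01 + ∫⁻ ω, ENNReal.ofReal (g ω - f ω) ∂P01 := by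
    rw [lintegral_congr_ae hsplit,
      lintegral_add_left' (aemeas_ofReal f)]
  have hz : ∫⁻ ω, ENNReal.ofReal (g ω - f ω) ∂P01 = 0 := by
    rw [hadd, hf1] at hg1
    by_contra h
    have : (1:ℝ≥0∞) < 1 + ∫⁻ ω, ENNReal.ofReal (g ω - f ω) ∂P01 :=
      ENNReal.lt_add_right one_ne_top h
    exact absurd hg1 (not_le.mpr this)
  have hzero : (fun ω => ENNReal.ofReal (g ω - f ω)) =ᵐ[P01] 0 := by
    rw [← lintegral_eq_zero_iff' (f := fun ω => ENNReal.ofReal (g ω - f ω))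
      ((g.aestronglyMeasurable.aemeasurable.sub f.aestronglyMeasurable.aemeasurable).ennreal_ofReal)]
    exact hz
  refine AEEqFun.ext ?_
  filter_upwards [hle, hzero] with ω h1 h2
  have : g ω - f ω ≤ 0 := ENNReal.ofReal_eq_zero.mp h2
  linarith

lemma min_int (f g : Omega01 →ₘ[P01] ℝ) :
    Integrable (fun ω => min 1 |f ω - g ω|) P01 := by
  have hm : AEStronglyMeasurable (fun ω => min 1 |f ω - g ω|) P01 :=
    ((aemeasurable_const.min
      ((f.aestronglyMeasurable.aemeasurable.sub
        g.aestronglyMeasurable.aemeasurable).norm))).aestronglyMeasurable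
  refine Integrable.mono' (integrable_const (1:ℝ)) hm ?_
  filter_upwards with ω
  rw [Real.norm_eq_abs, abs_of_nonneg (le_min zero_le_one (abs_nonneg _))]
  exact min_le_left _ _

lemma dist0_nonneg_ae (f g : Omega01 →ₘ[P01] ℝ) :
    (0 : Omega01 → ℝ) ≤ᵐ[P01] fun ω => min 1 |f ω - g ω| := by
  filter_upwards with ω
  exact le_min zero_le_one (abs_nonneg _)

lemma ofReal_dist0 (f g : Omega01 →ₘ[P01] ℝ) :
    ENNReal.ofReal (dist0 P01 f g) = ∫⁻ ω, ENNReal.ofReal (min 1 |f ω - g ω|) ∂P01 :=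
  ofReal_integral_eq_lintegral_ofReal (min_int f g) (dist0_nonneg_ae f g)

/-- Lemma B: members of the closure of `C01` are nonnegative with `E ≤ 1`. -/
lemma lemB (hg : g ∈ closure0 P01 C01) :
    0 ≤ g ∧ ∫⁻ ω, ENNReal.ofReal (g ω) ∂P01 ≤ 1 := by
  have hseq : ∀ n : ℕ, ∃ h ∈ C01, dist0 P01 g h < 1/(n+1) := fun n =>
    hg (1/(n+1)) (by positivity)
  choose h hC hd using hseq
  have htm : TendstoInMeasure P01 (fun n => (h n : Omega01 → ℝ)) atTop (g : Omega01 → ℝ) := by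
    rw [tendstoInMeasure_iff_dist]
    intro ε hε
    set δ : ℝ≥0∞ := ENNReal.ofReal (min 1 ε) with hδ
    have hδ0 : δ ≠ 0 := by
      rw [hδ, Ne, ENNReal.ofReal_eq_zero, not_le]
      exact lt_min one_pos hε
    have key : ∀ n, P01 {x | ε ≤ dist (h n x) ((g : Omega01 → ℝ) x)}
        ≤ δ⁻¹ * ENNReal.ofReal (1/(n+1)) := by
      intro n
      have hsub : {x | ε ≤ dist (h n x) ((g : Omega01 → ℝ) x)}
          ⊆ {x | δ ≤ ENNReal.ofReal (min 1 |g x - h n x|)} := by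
        intro x hx
        simp only [Set.mem_setOf_eq] at hx ⊢
        apply ENNReal.ofReal_le_ofReal
        rw [dist_comm, Real.dist_eq] at hx
        exact min_le_min le_rfl hx
      calc P01 {x | ε ≤ dist (h n x) ((g : Omega01 → ℝ) x)}
          ≤ P01 {x | δ ≤ ENNReal.ofReal (min 1 |g x - h n x|)} := measure_mono hsub
        _ ≤ δ⁻¹ * (δ * P01 {x | δ ≤ ENNReal.ofReal (min 1 |g x - h n x|)}) := by
            rw [← mul_assoc, ENNReal.inv_mul_cancel hδ0 ENNReal.ofReal_ne_top, one_mul]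
        _ ≤ δ⁻¹ * ∫⁻ x, ENNReal.ofReal (min 1 |g x - h n x|) ∂P01 :=
            mul_le_mul_right (mul_meas_ge_le_lintegral₀
              (((aemeasurable_const.min
                ((g.aestronglyMeasurable.aemeasurable.sub
                  (h n).aestronglyMeasurable.aemeasurable).norm))).ennreal_ofReal) δ) _
        _ = δ⁻¹ * ENNReal.ofReal (dist0 P01 g (h n)) := by rw [ofReal_dist0]
        _ ≤ δ⁻¹ * ENNReal.ofReal (1/(n+1)) :=
            mul_le_mul_right (ENNReal.ofReal_le_ofReal (hd n).le) _
    have hub : Tendsto (fun n : ℕ => δ⁻¹ * ENNReal.ofReal (1/(n+1))) atTop (nhds 0) := by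
      have h1 : Tendsto (fun n : ℕ => (1:ℝ)/(n+1)) atTop (nhds 0) :=
        tendsto_one_div_add_atTop_nhds_zero_nat
      have h2 : Tendsto (fun n : ℕ => ENNReal.ofReal (1/(n+1))) atTop (nhds 0) := by
        rw [show (0:ℝ≥0∞) = ENNReal.ofReal 0 by simp]
        exact (ENNReal.continuous_ofReal.tendsto 0).comp h1
      have := ENNReal.Tendsto.const_mul h2 (Or.inr (ENNReal.inv_ne_top.mpr hδ0))
      simpa using this
    exact tendsto_of_tendsto_of_tendsto_of_le_of_le tendsto_const_nhds hub
      (fun n => zero_le) key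
  obtain ⟨ns, hns, hae⟩ := htm.exists_seq_tendsto_ae
  have hpos : ∀ᵐ x ∂P01, ∀ n, 0 ≤ h n x := by
    rw [ae_all_iff]
    intro n
    exact (AEEqFun.coeFn_zero (μ := P01)).symm.trans_le
      ((AEEqFun.coeFn_le).mpr (hC n).1)
  constructor
  · rw [← AEEqFun.coeFn_le]
    refine (AEEqFun.coeFn_zero (μ := P01)).trans_le ?_
    filter_upwards [hae, hpos] with x hx hp
    exact ge_of_tendsto' hx (fun i => hp (ns i))
  · have hlim : ∀ᵐ x ∂P01, ENNReal.ofReal (g x)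
        = liminf (fun i => ENNReal.ofReal (h (ns i) x)) atTop := by
      filter_upwards [hae] with x hx
      exact (((ENNReal.continuous_ofReal.tendsto _).comp hx).liminf_eq).symm
    calc ∫⁻ x, ENNReal.ofReal (g x) ∂P01
        = ∫⁻ x, liminf (fun i => ENNReal.ofReal (h (ns i) x)) atTop ∂P01 :=
          lintegral_congr_ae hlim
      _ ≤ liminf (fun i => ∫⁻ x, ENNReal.ofReal (h (ns i) x) ∂P01) atTop :=
          lintegral_liminf_le' (fun i => aemeas_ofReal (h (ns i)))
      _ = 1 := by
          simp only [fun i => (hC (ns i)).2]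
          exact liminf_const 1

lemma C01_subset_closure : C01 ⊆ closure0 P01 C01 := by
  intro f hf ε hε
  refine ⟨f, hf, ?_⟩
  have : dist0 P01 f f = 0 := by
    simp [dist0]
  rw [this]; exact hε

/-- every maximal element of the closure belongs to C01 -/
lemma max_closure_subset : maxSet P01 (closure0 P01 C01) ⊆ C01 := by
  rintro f ⟨hf, hmax⟩
  obtain ⟨hf0, hfE⟩ := lemB hf
  rcases eq_or_lt_of_le hfE with hE | hE
  · exact ⟨hf0, hE⟩
  · exfalso
    set E := ∫⁻ ω, ENNReal.ofReal (f ω) ∂P01 with hEdef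
    set c : ℝ := (1 - E).toReal with hc
    have hcnn : (0:ℝ) ≤ c := ENNReal.toReal_nonneg
    have hco : ENNReal.ofReal c = 1 - E :=
      ENNReal.ofReal_toReal (by
        refine ne_top_of_le_ne_top one_ne_top ?_
        exact tsub_le_self.trans le_rfl)
    set g : Omega01 →ₘ[P01] ℝ := f + AEEqFun.const _ c with hgdef
    have hgco : (g : Omega01 → ℝ) =ᵐ[P01] fun ω => f ω + c := by
      filter_upwards [AEEqFun.coeFn_add f (AEEqFun.const _ c),
        AEEqFun.coeFn_const Omega01 c (μ := P01)] with ω h1 h2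
      rw [h1]; simp [h2, Function.const]
    have h0f : (0 : Omega01 → ℝ) ≤ᵐ[P01] f :=
      (AEEqFun.coeFn_zero (μ := P01)).symm.trans_le ((AEEqFun.coeFn_le).mpr hf0)
    have hgE : ∫⁻ ω, ENNReal.ofReal (g ω) ∂P01 = 1 := by
      have : ∫⁻ ω, ENNReal.ofReal (g ω) ∂P01
          = ∫⁻ ω, (ENNReal.ofReal (f ω) + ENNReal.ofReal c) ∂P01 := by
        refine lintegral_congr_ae ?_
        filter_upwards [hgco, h0f] with ω h1 h2
        rw [h1, ENNReal.ofReal_add h2 hcnn]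
      rw [this, lintegral_add_right _ measurable_const, lintegral_const,
        measure_univ, mul_one, hco, ← hEdef, add_tsub_cancel_of_le hE.le]
    have hg0 : 0 ≤ g := by
      rw [← AEEqFun.coeFn_le]
      refine (AEEqFun.coeFn_zero (μ := P01)).trans_le ?_
      filter_upwards [hgco, h0f] with ω h1 h2
      rw [h1]; linarith
    have hgC : g ∈ C01 := ⟨hg0, hgE⟩
    have hfg : f ≤ g := by
      rw [← AEEqFun.coeFn_le]
      filter_upwards [hgco] with ω h1
      rw [h1]; linarith
    have := hmax g (C01_subset_closure hgC) hfg
    rw [this] at hEdef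
    rw [hEdef] at hE
    exact (ne_of_lt hE) (hgE ▸ rfl)

end Aux

/-- On `Ω = (0,1)` with Lebesgue measure `P`, for
`C = {f ∈ L⁰₊ : E_P[f] = 1}`, the set of maximal elements of the closure of `C` equals
`{f ∈ L⁰₊ : E_P[f] = 1}`, which equals the set of maximal elements of `C`; in particular,
`C` is max-closed. -/
theorem statement12 :
    maxSet P01 (closure0 P01 C01) = C01 ∧ maxSet P01 C01 = C01 ∧ MaxClosed P01 C01 := by
  have h1 : maxSet P01 (closure0 P01 C01) = C01 := by
    apply Set.Subset.antisymm max_closure_subset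
    intro f hf
    refine ⟨C01_subset_closure hf, fun g hg hfg => ?_⟩
    exact lemA hf hfg (lemB hg).2
  have h2 : maxSet P01 C01 = C01 := by
    apply Set.Subset.antisymm (fun f hf => hf.1)
    intro f hf
    exact ⟨hf, fun g hg hfg => lemA hf hfg hg.2.le⟩
  exact ⟨h1, h2, h1.subset⟩
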